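/- arXiv:2010.02738 — 3 statements merged into one kernel-verified Lean document; each statement's English description precedes it below -/
import Mathlib

section
/- Let f : ℝ^n → ℝ be differentiable with μ-strongly monotone gradient for some μ > 0 (i.e. ⟨∇f(x₁) − ∇f(x₂), x₁ − x₂⟩ ≥ μ‖x₁ − x₂‖² for all x₁, x₂), let A ∈ ℝ^{m×n} and b ∈ ℝ^m. If x₁, x₂ : ℝ_{≥0} → ℝ^n are differentiable solutions of the gradient dynamics ẋ(t) = −∇f(x(t)) − Aᵀ(Ax(t) − b), then for all t ≥ 0, ‖x₁(t) − x₂(t)‖ ≤ e^{−μt} ‖x₁(0) − x₂(0)‖. In particular, the equilibrium of this dynamics is globally exponentially stable. -/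
open Matrix

lemma aux_adj {n m : ℕ} (A : Matrix (Fin m) (Fin n) ℝ) (u : EuclideanSpace ℝ (Fin m))
    (w : EuclideanSpace ℝ (Fin n)) :
    (inner ℝ (Matrix.toEuclideanLin Aᵀ u) w : ℝ) = inner ℝ u (Matrix.toEuclideanLin A w) := by
  rw [← A.conjTranspose_eq_transpose_of_trivial,
    Matrix.toEuclideanLin_conjTranspose_eq_adjoint, LinearMap.adjoint_inner_left]

/-- if `∇f` is `μ`-strongly monotone (`μ > 0`), then any two solutions of the
gradient dynamics `ẋ = −∇f(x) − Aᵀ(Ax − b)` contract at rate `e^{−μt}`; in particular the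
equilibrium of this dynamics is globally exponentially stable. -/
theorem statement_2 {n m : ℕ} (f : EuclideanSpace ℝ (Fin n) → ℝ)
    (hdiff : Differentiable ℝ f) (μ : ℝ) (hμ : 0 < μ)
    (hmono : ∀ x₁ x₂ : EuclideanSpace ℝ (Fin n),
      μ * ‖x₁ - x₂‖ ^ 2 ≤ (inner ℝ (gradient f x₁ - gradient f x₂) (x₁ - x₂) : ℝ))
    (A : Matrix (Fin m) (Fin n) ℝ) (b : EuclideanSpace ℝ (Fin m))
    (x₁ x₂ : ℝ → EuclideanSpace ℝ (Fin n))
    (h₁ : ∀ t, 0 ≤ t → HasDerivAt x₁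
      (-gradient f (x₁ t) - Matrix.toEuclideanLin Aᵀ (Matrix.toEuclideanLin A (x₁ t) - b)) t)
    (h₂ : ∀ t, 0 ≤ t → HasDerivAt x₂
      (-gradient f (x₂ t) - Matrix.toEuclideanLin Aᵀ (Matrix.toEuclideanLin A (x₂ t) - b)) t) :
    ∀ t, 0 ≤ t → ‖x₁ t - x₂ t‖ ≤ Real.exp (-μ * t) * ‖x₁ 0 - x₂ 0‖ := by
  set y : ℝ → EuclideanSpace ℝ (Fin n) := fun t => x₁ t - x₂ t with hy
  set v : ℝ → EuclideanSpace ℝ (Fin n) := fun t =>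
    (-gradient f (x₁ t) - Matrix.toEuclideanLin Aᵀ (Matrix.toEuclideanLin A (x₁ t) - b)) -
    (-gradient f (x₂ t) - Matrix.toEuclideanLin Aᵀ (Matrix.toEuclideanLin A (x₂ t) - b)) with hv
  have hyd : ∀ t, 0 ≤ t → HasDerivAt y (v t) t := fun t ht => (h₁ t ht).sub (h₂ t ht)
  set F : ℝ → ℝ := fun t => (inner ℝ (y t) (y t) : ℝ) * Real.exp (2 * μ * t) with hF
  set D : ℝ → ℝ := fun t =>
    ((inner ℝ (y t) (v t) : ℝ) + (inner ℝ (v t) (y t) : ℝ)) * Real.exp (2 * μ * t) +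
      (inner ℝ (y t) (y t) : ℝ) * (Real.exp (2 * μ * t) * (2 * μ)) with hD
  have hFd : ∀ t, 0 ≤ t → HasDerivAt F (D t) t := by
    intro t ht
    have h1 : HasDerivAt (fun t => (inner ℝ (y t) (y t) : ℝ))
        ((inner ℝ (y t) (v t) : ℝ) + (inner ℝ (v t) (y t) : ℝ)) t :=
      (hyd t ht).inner ℝ (hyd t ht)
    have h2 : HasDerivAt (fun t => Real.exp (2 * μ * t)) (Real.exp (2 * μ * t) * (2 * μ)) t := by
      simpa [Function.comp_def] using (Real.hasDerivAt_exp (2 * μ * t)).comp t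
        ((hasDerivAt_id t).const_mul (2 * μ))
    exact h1.mul h2
  -- the key inequality : D t ≤ 0 for t ≥ 0
  have hDle : ∀ t, 0 ≤ t → D t ≤ 0 := by
    intro t ht
    have hvy : (inner ℝ (v t) (y t) : ℝ) ≤ -μ * ‖y t‖ ^ 2 := by
      have hveq : v t = -(gradient f (x₁ t) - gradient f (x₂ t)) -
          Matrix.toEuclideanLin Aᵀ (Matrix.toEuclideanLin A (y t)) := by
        simp only [hv, hy, map_sub]
        abel
      rw [hveq]
      have h1 := hmono (x₁ t) (x₂ t)
      have h2 : (0 : ℝ) ≤ inner ℝ (Matrix.toEuclideanLin Aᵀ (Matrix.toEuclideanLin A (y t))) (y t) := by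
        rw [aux_adj]
        exact real_inner_self_nonneg
      have := inner_sub_left (𝕜 := ℝ) (-(gradient f (x₁ t) - gradient f (x₂ t)))
        (Matrix.toEuclideanLin Aᵀ (Matrix.toEuclideanLin A (y t))) (y t)
      rw [this, inner_neg_left]
      have : (inner ℝ (gradient f (x₁ t) - gradient f (x₂ t)) (y t) : ℝ) ≥ μ * ‖y t‖ ^ 2 := h1
      nlinarith
    have hyy : (inner ℝ (y t) (y t) : ℝ) = ‖y t‖ ^ 2 := real_inner_self_eq_norm_sq _
    have hsym : (inner ℝ (y t) (v t) : ℝ) = inner ℝ (v t) (y t) := real_inner_comm _ _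
    have hexp : 0 < Real.exp (2 * μ * t) := Real.exp_pos _
    rw [hD]
    simp only [hsym, hyy]
    nlinarith [hvy, hexp, sq_nonneg ‖y t‖]
  -- F is antitone on [0, ∞)
  have hanti : AntitoneOn F (Set.Ici 0) := by
    apply antitoneOn_of_deriv_nonpos (convex_Ici 0)
    · intro t ht
      exact (hFd t ht).continuousAt.continuousWithinAt
    · intro t ht
      rw [interior_Ici] at ht
      exact (hFd t (le_of_lt ht)).differentiableAt.differentiableWithinAt
    · intro t ht
      rw [interior_Ici] at ht
      rw [(hFd t (le_of_lt ht)).deriv]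
      exact hDle t (le_of_lt ht)
  intro t ht
  have hFt : F t ≤ F 0 := hanti Set.self_mem_Ici ht ht
  have hyy : ∀ s, (inner ℝ (y s) (y s) : ℝ) = ‖y s‖ ^ 2 := fun s => real_inner_self_eq_norm_sq _
  rw [hF] at hFt
  simp only [hyy, mul_zero, Real.exp_zero, mul_one] at hFt
  have key : ‖y t‖ ^ 2 ≤ (Real.exp (-μ * t) * ‖y 0‖) ^ 2 := by
    have hexp : Real.exp (-μ * t) ^ 2 = Real.exp (-(2 * μ * t)) := by
      rw [← Real.exp_nat_mul]; ring_nf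
    rw [mul_pow, hexp, Real.exp_neg, inv_mul_eq_div, le_div_iff₀ (Real.exp_pos _)]
    linarith
  have h0 : 0 ≤ Real.exp (-μ * t) * ‖y 0‖ :=
    mul_nonneg (Real.exp_pos _).le (norm_nonneg _)
  exact (pow_le_pow_iff_left₀ (norm_nonneg _) h0 two_ne_zero).mp key
end

section
/- Let H be a symmetric positive definite n×n real matrix, let A be a real m×n matrix of full row rank m, let q₁ > 0 and k > 0, and suppose AAᵀ ⪰ q₁ I_m. If the matrix 2kH − 2AᵀA − q₁ I_n − H Aᵀ(AAᵀ)^{−1} A H is positive semidefinite, then the symmetric block matrix [[2kH − 2AᵀA, H Aᵀ], [A H, 2AAᵀ]] satisfies [[2kH − 2AᵀA, H Aᵀ], [A H, 2AAᵀ]] ⪰ q₁ I_{n+m} in the Loewner order. -/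
open Matrix

lemma aux_diag_psd {n m : ℕ} {X : Matrix (Fin n) (Fin n) ℝ} {Y : Matrix (Fin m) (Fin m) ℝ}
    (hX : X.PosSemidef) (hY : Y.PosSemidef) :
    (Matrix.fromBlocks X 0 0 Y).PosSemidef := by
  refine Matrix.PosSemidef.of_dotProduct_mulVec_nonneg ?_ ?_
  · rw [Matrix.IsHermitian, Matrix.fromBlocks_conjTranspose, hX.1.eq, hY.1.eq]
    simp
  · intro x
    rw [Matrix.fromBlocks_mulVec, ← Sum.elim_comp_inl_inr (star x)]
    have h1 : (star x) ∘ Sum.inl = star (x ∘ Sum.inl) := rfl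
    have h2 : (star x) ∘ Sum.inr = star (x ∘ Sum.inr) := rfl
    rw [h1, h2, sumElim_dotProduct_sumElim]
    simp only [Matrix.zero_mulVec, add_zero, zero_add]
    exact add_nonneg (hX.dotProduct_mulVec_nonneg _) (hY.dotProduct_mulVec_nonneg _)

/-- if `H ≻ 0`, `A` has full row rank, `AAᵀ ⪰ q₁I` and the Schur complement
`2kH − 2AᵀA − q₁I − HAᵀ(AAᵀ)⁻¹AH` is positive semidefinite, then the symmetric block matrix
`[[2kH − 2AᵀA, HAᵀ], [AH, 2AAᵀ]]` dominates `q₁ I_{n+m}` in the Loewner order. -/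
theorem statement_4 {n m : ℕ} (H : Matrix (Fin n) (Fin n) ℝ) (hH : H.PosDef)
    (A : Matrix (Fin m) (Fin n) ℝ) (hrank : A.rank = m)
    (q₁ k : ℝ) (hq₁ : 0 < q₁) (hk : 0 < k)
    (hAA : (A * Aᵀ - q₁ • 1).PosSemidef)
    (hschur : ((2 * k) • H - (2 : ℝ) • (Aᵀ * A) - q₁ • 1
        - H * Aᵀ * (A * Aᵀ)⁻¹ * A * H).PosSemidef) :
    (Matrix.fromBlocks ((2 * k) • H - (2 : ℝ) • (Aᵀ * A)) (H * Aᵀ)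
        (A * H) ((2 : ℝ) • (A * Aᵀ)) - q₁ • 1).PosSemidef := by
  -- q₁ • 1 is positive definite
  have hq1I : (q₁ • (1 : Matrix (Fin m) (Fin m) ℝ)).PosDef := by
    rw [Matrix.smul_one_eq_diagonal]
    exact Matrix.posDef_diagonal_iff.mpr fun _ => hq₁
  -- AAᵀ is positive definite
  have hAAT : (A * Aᵀ).PosDef := by
    have heq : A * Aᵀ = (A * Aᵀ - q₁ • 1) + q₁ • 1 := by abel
    rw [heq]
    exact Matrix.PosDef.posSemidef_add hAA hq1I
  have : Invertible (A * Aᵀ) :=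
    (A * Aᵀ).invertibleOfIsUnitDet (isUnit_iff_ne_zero.2 hAAT.det_pos.ne')
  -- second summand: Schur complement block matrix
  have hBH : (H * Aᵀ)ᴴ = A * H := by
    rw [Matrix.conjTranspose_mul, hH.1.eq]
    congr 1
  have hM2 : (Matrix.fromBlocks (H * Aᵀ * (A * Aᵀ)⁻¹ * A * H) (H * Aᵀ)
      (A * H) (A * Aᵀ)).PosSemidef := by
    rw [← hBH]
    rw [Matrix.PosDef.fromBlocks₂₂ _ _ hAAT]
    have : H * Aᵀ * (A * Aᵀ)⁻¹ * A * H - H * Aᵀ * (A * Aᵀ)⁻¹ * (H * Aᵀ)ᴴ = 0 := by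
      rw [hBH]; simp [Matrix.mul_assoc]
    rw [this]
    exact Matrix.PosSemidef.zero
  have hM1 : (Matrix.fromBlocks ((2 * k) • H - (2 : ℝ) • (Aᵀ * A) - q₁ • 1
      - H * Aᵀ * (A * Aᵀ)⁻¹ * A * H) (0 : Matrix (Fin n) (Fin m) ℝ)
      (0 : Matrix (Fin m) (Fin n) ℝ) (A * Aᵀ - q₁ • 1)).PosSemidef :=
    aux_diag_psd hschur hAA
  have hsum := hM1.add hM2
  convert hsum using 1
  rw [Matrix.fromBlocks_add]
  have h1 : (q₁ • (1 : Matrix (Fin n ⊕ Fin m) (Fin n ⊕ Fin m) ℝ))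
      = Matrix.fromBlocks (q₁ • 1) 0 0 (q₁ • 1) := by
    rw [← Matrix.fromBlocks_one, Matrix.fromBlocks_smul]
    simp
  rw [h1, sub_eq_add_neg, Matrix.fromBlocks_neg, Matrix.fromBlocks_add]
  abel_nf
  simp
  rw [add_comm, two_smul, two_mul]
end

section
/- Let Ω = ℝ^n × ℝ_{≥0}^m and let P_Ω(x,λ) = (x, λ⁺) be the Euclidean projection onto Ω, where λ⁺ is the componentwise positive part. Let ν > 0, 𝐋 > 0, and let F : ℝ^{n+m} → ℝ^{n+m} be ν-strongly monotone on Ω (⟨F(z₁) − F(z₂), z₁ − z₂⟩ ≥ ν‖z₁ − z₂‖² for all z₁, z₂ ∈ Ω) and 𝐋-Lipschitz continuous on Ω. Let α, β > 0 with α < 4ν/𝐋², and let z* ∈ Ω satisfy P_Ω(z* − αF(z*)) = z*. If z : ℝ_{≥0} → ℝ^{n+m} is differentiable, z(t) ∈ Ω for all t ≥ 0, and z solves the projected dynamics ż(t) = β( P_Ω(z(t) − αF(z(t))) − z(t) ), then for all t ≥ 0, ‖z(t) − z*‖ ≤ ‖z(0) − z*‖ · e^{−αβ(4ν − α𝐋²)t/8}.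 In particular, z* is globally exponentially stable. -/
open Matrix

/-- The primal-dual phase space `ℝ^n × ℝ^m` with the Euclidean (ℓ²) structure. -/
abbrev PD (n m : ℕ) := WithLp 2 (EuclideanSpace ℝ (Fin n) × EuclideanSpace ℝ (Fin m))

/-- The feasible set `Ω = ℝ^n × ℝ_{≥0}^m`. -/
def Omega (n m : ℕ) : Set (PD n m) := {z | ∀ i, 0 ≤ z.ofLp.2 i}

/-- Euclidean projection onto `Ω`: `P_Ω(x,λ) = (x, λ⁺)`. -/
noncomputable def projOmega {n m : ℕ} (z : PD n m) : PD n m :=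
  WithLp.toLp 2 (z.ofLp.1, WithLp.toLp 2 (fun i => max (z.ofLp.2 i) 0))

lemma proj_mem {n m : ℕ} (u : PD n m) : projOmega u ∈ Omega n m :=
  fun i => le_max_right _ _

lemma proj_char {n m : ℕ} (u v : PD n m) (hv : v ∈ Omega n m) :
    (inner ℝ (projOmega u - u) (projOmega u - v) : ℝ) ≤ 0 := by
  rw [WithLp.prod_inner_apply]
  have h1 : (projOmega u - u).ofLp.1 = 0 := sub_self u.ofLp.1
  rw [h1, inner_zero_left, zero_add]
  have h2 : (inner ℝ ((projOmega u - u).ofLp.2) ((projOmega u - v).ofLp.2) : ℝ)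
      = ∑ i, (max (u.ofLp.2 i) 0 - u.ofLp.2 i) * (max (u.ofLp.2 i) 0 - v.ofLp.2 i) := by
    rw [PiLp.inner_apply]; exact Finset.sum_congr rfl fun i _ => mul_comm _ _
  rw [h2]
  apply Finset.sum_nonpos
  intro i _
  rcases le_or_gt 0 (u.ofLp.2 i) with h | h
  · rw [max_eq_left h]; simp
  · rw [max_eq_right h.le]
    have := hv i
    nlinarith

lemma key_estimate {n m : ℕ} (ν L α : ℝ)
    (hν : 0 < ν) (hL : 0 < L) (hα : 0 < α)
    (F : PD n m → PD n m)
    (hmono : ∀ z₁ ∈ Omega n m, ∀ z₂ ∈ Omega n m,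
      ν * ‖z₁ - z₂‖ ^ 2 ≤ (inner ℝ (F z₁ - F z₂) (z₁ - z₂) : ℝ))
    (hlip : ∀ z₁ ∈ Omega n m, ∀ z₂ ∈ Omega n m, ‖F z₁ - F z₂‖ ≤ L * ‖z₁ - z₂‖)
    (zstar : PD n m) (hzstar : zstar ∈ Omega n m)
    (hfix : projOmega (zstar - α • F zstar) = zstar)
    (zt : PD n m) (hzt : zt ∈ Omega n m) :
    (inner ℝ (projOmega (zt - α • F zt) - zt) (zt - zstar) : ℝ)
      ≤ -(α * (4 * ν - α * L ^ 2) / 4) * ‖zt - zstar‖ ^ 2 := by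
  set w := projOmega (zt - α • F zt) with hw
  have hwmem : w ∈ Omega n m := proj_mem _
  have h1 : (inner ℝ (w - (zt - α • F zt)) (w - zstar) : ℝ) ≤ 0 := proj_char _ _ hzstar
  have h2 : (inner ℝ ((α • F zstar : PD n m)) (zstar - w) : ℝ) ≤ 0 := by
    have h := proj_char (zstar - α • F zstar) w hwmem
    rwa [hfix, sub_sub_cancel] at h
  rw [real_inner_smul_left] at h2
  have h2' : 0 ≤ (inner ℝ (F zstar) (w - zstar) : ℝ) := by
    have e : (inner ℝ (F zstar) (w - zstar) : ℝ) = -(inner ℝ (F zstar) (zstar - w) : ℝ) := by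
      rw [← inner_neg_right]; congr 1; abel
    nlinarith
  -- expand h1
  have hrw : (w - (zt - α • F zt) : PD n m) = (w - zt) + α • F zt := by
    abel_nf
  rw [hrw, inner_add_left, real_inner_smul_left] at h1
  -- e3 : decompose inner ℝ (F zt) (w - zstar)
  have e3 : (inner ℝ (F zt) (w - zstar) : ℝ)
      = inner ℝ (F zt - F zstar) (zt - zstar) + inner ℝ (F zt - F zstar) (w - zt)
        + inner ℝ (F zstar) (w - zstar) := by
    simp only [inner_sub_left, inner_sub_right]; ring
  have e1 : (inner ℝ (w - zt) (zt - zstar) : ℝ)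
      = -‖w - zt‖ ^ 2 + inner ℝ (w - zt) (w - zstar) := by
    have hz : (zt - zstar : PD n m) = -(w - zt) + (w - zstar) := by abel
    rw [hz, inner_add_right, inner_neg_right, real_inner_self_eq_norm_sq]
  have hp : ν * ‖zt - zstar‖ ^ 2 ≤ (inner ℝ (F zt - F zstar) (zt - zstar) : ℝ) :=
    hmono _ hzt _ hzstar
  have hq : |(inner ℝ (F zt - F zstar) (w - zt) : ℝ)| ≤ (L * ‖zt - zstar‖) * ‖w - zt‖ := by
    calc |(inner ℝ (F zt - F zstar) (w - zt) : ℝ)| ≤ ‖F zt - F zstar‖ * ‖w - zt‖ :=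
          abs_real_inner_le_norm _ _
      _ ≤ (L * ‖zt - zstar‖) * ‖w - zt‖ := by
          apply mul_le_mul_of_nonneg_right (hlip _ hzt _ hzstar) (norm_nonneg _)
  have hq' : -((L * ‖zt - zstar‖) * ‖w - zt‖) ≤ (inner ℝ (F zt - F zstar) (w - zt) : ℝ) :=
    neg_le_of_abs_le hq
  have hps := mul_le_mul_of_nonneg_left hp hα.le
  have hqs := mul_le_mul_of_nonneg_left hq' hα.le
  have hrs := mul_nonneg hα.le h2'
  rw [e1]
  nlinarith [sq_nonneg (‖w - zt‖ - α * L * ‖zt - zstar‖ / 2), norm_nonneg (w - zt),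
    norm_nonneg (zt - zstar), sq_nonneg ‖zt - zstar‖, e3, h1]

set_option maxHeartbeats 1000000 in
set_option synthInstance.maxHeartbeats 400000 in
/-- for a `ν`-strongly monotone and `𝐋`-Lipschitz map `F` on `Ω`, with
`0 < α < 4ν/𝐋²` and `β > 0`, every feasible solution of the projected dynamics
`ż = β(P_Ω(z − αF(z)) − z)` converges globally exponentially to the fixed point `z*`:
`‖z(t) − z*‖ ≤ ‖z(0) − z*‖ e^{−αβ(4ν − α𝐋²)t/8}`. -/
theorem statement_6 {n m : ℕ} (ν L α β : ℝ)
    (hν : 0 < ν) (hL : 0 < L) (hα : 0 < α) (hβ : 0 < β) (hαL : α < 4 * ν / L ^ 2)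
    (F : PD n m → PD n m)
    (hmono : ∀ z₁ ∈ Omega n m, ∀ z₂ ∈ Omega n m,
      ν * ‖z₁ - z₂‖ ^ 2 ≤ (inner ℝ (F z₁ - F z₂) (z₁ - z₂) : ℝ))
    (hlip : ∀ z₁ ∈ Omega n m, ∀ z₂ ∈ Omega n m, ‖F z₁ - F z₂‖ ≤ L * ‖z₁ - z₂‖)
    (zstar : PD n m) (hzstar : zstar ∈ Omega n m)
    (hfix : projOmega (zstar - α • F zstar) = zstar)
    (z : ℝ → PD n m) (hfeas : ∀ t, 0 ≤ t → z t ∈ Omega n m)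
    (hode : ∀ t, 0 ≤ t →
      HasDerivAt z (β • (projOmega (z t - α • F (z t)) - z t)) t) :
    ∀ t, 0 ≤ t →
      ‖z t - zstar‖ ≤ ‖z 0 - zstar‖ * Real.exp (-(α * β * (4 * ν - α * L ^ 2) * t / 8)) := by
  have hpos : 0 < 4 * ν - α * L ^ 2 := by
    have h := (lt_div_iff₀ (by positivity : (0:ℝ) < L ^ 2)).mp hαL
    nlinarith
  set c : ℝ := α * β * (4 * ν - α * L ^ 2) / 2 with hc
  have hcpos : 0 < c := by positivity
  set g : ℝ → ℝ := fun s => (inner ℝ (z s - zstar) (z s - zstar) : ℝ) * Real.exp (c * s)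
    with hg
  -- derivative of g
  have hgd : ∀ t, 0 ≤ t → HasDerivAt g
      ((inner ℝ (z t - zstar) (β • (projOmega (z t - α • F (z t)) - z t)) +
        inner ℝ (β • (projOmega (z t - α • F (z t)) - z t)) (z t - zstar) : ℝ)
        * Real.exp (c * t)
        + (inner ℝ (z t - zstar) (z t - zstar) : ℝ) * (Real.exp (c * t) * (c * 1))) t := by
    intro t ht
    haveI : ContinuousSMul ℝ (PD n m) := IsBoundedSMul.continuousSMul
    have hzs : HasDerivAt (fun s => z s - zstar)
        (β • (projOmega (z t - α • F (z t)) - z t)) t := (hode t ht).sub_const _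
    have hin := HasDerivAt.inner ℝ hzs hzs
    have hexp : HasDerivAt (fun s => Real.exp (c * s)) (Real.exp (c * t) * (c * 1)) t :=
      ((hasDerivAt_id t).const_mul c).exp
    exact hin.mul hexp
  -- derivative nonpositive
  have hderiv_nonpos : ∀ t, 0 ≤ t → deriv g t ≤ 0 := by
    intro t ht
    rw [(hgd t ht).deriv]
    have key := key_estimate ν L α hν hL hα F hmono hlip zstar hzstar hfix (z t) (hfeas t ht)
    have hcomm : (inner ℝ (z t - zstar) (β • (projOmega (z t - α • F (z t)) - z t)) : ℝ)
        = inner ℝ (β • (projOmega (z t - α • F (z t)) - z t)) (z t - zstar) :=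
      real_inner_comm _ _
    have hsm : (inner ℝ (β • (projOmega (z t - α • F (z t)) - z t)) (z t - zstar) : ℝ)
        = β * inner ℝ (projOmega (z t - α • F (z t)) - z t) (z t - zstar) :=
      real_inner_smul_left _ _ _
    have hself : (inner ℝ (z t - zstar) (z t - zstar) : ℝ) = ‖z t - zstar‖ ^ 2 :=
      real_inner_self_eq_norm_sq _
    rw [hcomm, hsm, hself]
    have hE : 0 < Real.exp (c * t) := Real.exp_pos _
    have hb := mul_le_mul_of_nonneg_left key hβ.le
    have hb2 := mul_le_mul_of_nonneg_right hb hE.le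
    rw [hc]
    nlinarith [hb2, sq_nonneg ‖z t - zstar‖]
  -- g antitone on Ici 0
  have hanti : AntitoneOn g (Set.Ici (0:ℝ)) := by
    apply antitoneOn_of_deriv_nonpos (convex_Ici 0)
    · intro t ht
      exact (hgd t ht).continuousAt.continuousWithinAt
    · intro t ht
      rw [interior_Ici] at ht
      exact (hgd t (le_of_lt ht)).differentiableAt.differentiableWithinAt
    · intro t ht
      rw [interior_Ici] at ht
      exact hderiv_nonpos t (le_of_lt ht)
  intro t ht
  have hgt : g t ≤ g 0 := hanti (Set.self_mem_Ici) ht ht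
  have hV : ‖z t - zstar‖ ^ 2 * Real.exp (c * t) ≤ ‖z 0 - zstar‖ ^ 2 := by
    have := hgt
    simp only [hg, real_inner_self_eq_norm_sq, mul_zero, Real.exp_zero, mul_one] at this
    exact this
  have hE : 0 < Real.exp (c * t) := Real.exp_pos _
  have hVt : ‖z t - zstar‖ ^ 2 ≤ ‖z 0 - zstar‖ ^ 2 * Real.exp (-(c * t)) := by
    have h' : ‖z t - zstar‖ ^ 2
        = ‖z t - zstar‖ ^ 2 * Real.exp (c * t) * (Real.exp (c * t))⁻¹ := by
      field_simp
    rw [Real.exp_neg, h']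
    exact mul_le_mul_of_nonneg_right hV (by positivity)
  -- take square roots
  have step1 : ‖z t - zstar‖ ≤ ‖z 0 - zstar‖ * Real.exp (-(c * t) / 2) := by
    have hsq : (‖z 0 - zstar‖ * Real.exp (-(c * t) / 2)) ^ 2
        = ‖z 0 - zstar‖ ^ 2 * Real.exp (-(c * t)) := by
      have he : (Real.exp (-(c * t) / 2)) ^ 2 = Real.exp (-(c * t)) := by
        rw [sq, ← Real.exp_add]; ring_nf
      rw [mul_pow, he]
    have h2 : ‖z t - zstar‖ ^ 2 ≤ (‖z 0 - zstar‖ * Real.exp (-(c * t) / 2)) ^ 2 := by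
      rw [hsq]; exact hVt
    have := Real.sqrt_le_sqrt h2
    rwa [Real.sqrt_sq (norm_nonneg _), Real.sqrt_sq (by positivity)] at this
  refine step1.trans ?_
  apply mul_le_mul_of_nonneg_left _ (norm_nonneg _)
  apply Real.exp_le_exp.mpr
  rw [hc]
  nlinarith [mul_nonneg (mul_nonneg (mul_nonneg hα.le hβ.le) hpos.le) ht]
end
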